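/- For an n×m data matrix X with K = 1 group and group-mean matrix X̄ = X 𝟙/m (replicated: X̄_full = X C_m), the extended matrix X̃(a,b) = (a^{-1/2}(X − X C_m), (m/b)^{1/2} X 𝟙/m) satisfies (1/n) X̃(λ₁,μ₁)ᵀ X̃(λ₁,μ₁) having the property that for α̃ related to α by α = Ũ S̃⁻¹ α̃ with Ũ = (I − C_m, 𝟙/√m) and S̃ = diag(√λ₁ I_m, √μ₁): αᵀ((1/n)XᵀX + λ₁(I−C_m) + μ₁C_m)α = α̃ᵀ((1/n)X̃ᵀX̃ + I)α̃, for λ₁, μ₁ > 0. -/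

import Mathlib

open Matrix

/-- The `m × m` averaging matrix `C_m = (1/m)𝟙𝟙ᵀ`. -/
noncomputable def Cavg (m : ℕ) : Matrix (Fin m) (Fin m) ℝ := Matrix.of fun _ _ => (m : ℝ)⁻¹

/-- `Ũ = (I − C_m, 𝟙/√m) ∈ ℝ^{m×(m+1)}` (column index type `Fin m ⊕ Fin 1`). -/
noncomputable def Utilde (m : ℕ) : Matrix (Fin m) (Fin m ⊕ Fin 1) ℝ :=
  Matrix.fromCols ((1 : Matrix (Fin m) (Fin m) ℝ) - Cavg m)
    (Matrix.of fun (_ : Fin m) (_ : Fin 1) => (Real.sqrt m)⁻¹)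

/-- `S̃ = diag(√λ₁ I_m, √μ₁)`. -/
noncomputable def Stilde (m : ℕ) (l1 m1 : ℝ) : Matrix (Fin m ⊕ Fin 1) (Fin m ⊕ Fin 1) ℝ :=
  Matrix.fromBlocks (Real.sqrt l1 • (1 : Matrix (Fin m) (Fin m) ℝ)) 0 0
    (Real.sqrt m1 • (1 : Matrix (Fin 1) (Fin 1) ℝ))

/-- The extended feature matrix
`X̃(a,b) = (a^{-1/2}(X − X C_m), (m/b)^{1/2} X𝟙/m)`. -/
noncomputable def Xext (n m : ℕ) (X : Matrix (Fin n) (Fin m) ℝ) (a b : ℝ) :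
    Matrix (Fin n) (Fin m ⊕ Fin 1) ℝ :=
  Matrix.fromCols ((Real.sqrt a)⁻¹ • (X * ((1 : Matrix (Fin m) (Fin m) ℝ) - Cavg m)))
    (Matrix.of fun (i : Fin n) (_ : Fin 1) =>
      Real.sqrt ((m : ℝ) / b) * ((∑ j, X i j) / m))

noncomputable def Ucol (m : ℕ) : Matrix (Fin m) (Fin 1) ℝ :=
  Matrix.of fun _ _ => (Real.sqrt m)⁻¹

lemma Utilde_eq (m : ℕ) : Utilde m =
    Matrix.fromCols ((1 : Matrix (Fin m) (Fin m) ℝ) - Cavg m) (Ucol m) := rfl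

lemma CC (m : ℕ) (hm : 0 < m) : Cavg m * Cavg m = Cavg m := by
  have h : (m : ℝ) ≠ 0 := Nat.cast_ne_zero.mpr hm.ne'
  ext i j
  simp [Cavg, mul_apply]
  rw [← mul_assoc, mul_inv_cancel₀ h, one_mul]

lemma Csymm (m : ℕ) : (Cavg m)ᵀ = Cavg m := rfl

lemma Psymm (m : ℕ) : ((1 : Matrix (Fin m) (Fin m) ℝ) - Cavg m)ᵀ =
    (1 : Matrix (Fin m) (Fin m) ℝ) - Cavg m := by
  rw [transpose_sub, transpose_one, Csymm]

lemma PP (m : ℕ) (hm : 0 < m) :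
    ((1 : Matrix (Fin m) (Fin m) ℝ) - Cavg m) * ((1 : Matrix (Fin m) (Fin m) ℝ) - Cavg m) =
      (1 : Matrix (Fin m) (Fin m) ℝ) - Cavg m := by
  rw [Matrix.sub_mul, Matrix.mul_sub, Matrix.mul_sub, one_mul, mul_one, one_mul, CC m hm]
  abel

lemma colrow (m : ℕ) (hm : 0 < m) : Ucol m * (Ucol m)ᵀ = Cavg m := by
  ext i j
  simp [Ucol, Cavg, mul_apply]
  rw [← mul_inv, Real.mul_self_sqrt (Nat.cast_nonneg m)]

lemma UUt (m : ℕ) (hm : 0 < m) : Utilde m * (Utilde m)ᵀ = 1 := by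
  rw [Utilde_eq, transpose_fromCols, fromCols_mul_fromRows, Psymm,
    PP m hm, colrow m hm]
  simp

noncomputable def Sinv (m : ℕ) (l1 m1 : ℝ) : Matrix (Fin m ⊕ Fin 1) (Fin m ⊕ Fin 1) ℝ :=
  Matrix.fromBlocks ((Real.sqrt l1)⁻¹ • (1 : Matrix (Fin m) (Fin m) ℝ)) 0 0
    ((Real.sqrt m1)⁻¹ • (1 : Matrix (Fin 1) (Fin 1) ℝ))

lemma Stilde_mul_Sinv (m : ℕ) {l1 m1 : ℝ} (hl1 : 0 < l1) (hm1 : 0 < m1) :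
    Stilde m l1 m1 * Sinv m l1 m1 = 1 := by
  have h1 : Real.sqrt l1 ≠ 0 := (Real.sqrt_pos.mpr hl1).ne'
  have h2 : Real.sqrt m1 ≠ 0 := (Real.sqrt_pos.mpr hm1).ne'
  rw [Stilde, Sinv, fromBlocks_multiply]
  simp [smul_smul, mul_inv_cancel₀ h1, mul_inv_cancel₀ h2,
    inv_mul_cancel₀ h1, inv_mul_cancel₀ h2, ← fromBlocks_one]

lemma Sinv_eq (m : ℕ) {l1 m1 : ℝ} (hl1 : 0 < l1) (hm1 : 0 < m1) :
    (Stilde m l1 m1)⁻¹ = Sinv m l1 m1 :=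
  inv_eq_right_inv (Stilde_mul_Sinv m hl1 hm1)

lemma Sinv_mul_Stilde (m : ℕ) {l1 m1 : ℝ} (hl1 : 0 < l1) (hm1 : 0 < m1) :
    Sinv m l1 m1 * Stilde m l1 m1 = 1 := by
  have h1 : Real.sqrt l1 ≠ 0 := (Real.sqrt_pos.mpr hl1).ne'
  have h2 : Real.sqrt m1 ≠ 0 := (Real.sqrt_pos.mpr hm1).ne'
  rw [Stilde, Sinv, fromBlocks_multiply]
  simp [smul_smul, mul_inv_cancel₀ h1, mul_inv_cancel₀ h2,
    inv_mul_cancel₀ h1, inv_mul_cancel₀ h2, ← fromBlocks_one]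

lemma SS (m : ℕ) {l1 m1 : ℝ} (hl1 : 0 < l1) (hm1 : 0 < m1) :
    Stilde m l1 m1 * Stilde m l1 m1 =
      Matrix.fromBlocks (l1 • (1 : Matrix (Fin m) (Fin m) ℝ)) 0 0
        (m1 • (1 : Matrix (Fin 1) (Fin 1) ℝ)) := by
  rw [Stilde, fromBlocks_multiply]
  simp [smul_smul, Real.mul_self_sqrt hl1.le, Real.mul_self_sqrt hm1.le]

lemma Ssymm (m : ℕ) (l1 m1 : ℝ) : (Stilde m l1 m1)ᵀ = Stilde m l1 m1 := by
  rw [Stilde, fromBlocks_transpose]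
  simp

lemma USSU (m : ℕ) (hm : 0 < m) {l1 m1 : ℝ} (hl1 : 0 < l1) (hm1 : 0 < m1) :
    Utilde m * (Stilde m l1 m1 * Stilde m l1 m1) * (Utilde m)ᵀ =
      l1 • ((1 : Matrix (Fin m) (Fin m) ℝ) - Cavg m) + m1 • Cavg m := by
  rw [SS m hl1 hm1, Utilde_eq, transpose_fromCols, Psymm,
    fromCols_mul_fromBlocks, fromCols_mul_fromRows]
  simp only [Matrix.mul_zero, Matrix.zero_mul, add_zero, zero_add, Matrix.mul_smul,
    Matrix.mul_one]
  rw [Matrix.smul_mul, Matrix.smul_mul, PP m hm, colrow m hm]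

lemma Xext_eq (n m : ℕ) (hm : 0 < m) {l1 m1 : ℝ} (hl1 : 0 < l1) (hm1 : 0 < m1)
    (X : Matrix (Fin n) (Fin m) ℝ) :
    Xext n m X l1 m1 = X * Utilde m * Sinv m l1 m1 := by
  have hmr : (0:ℝ) < (m:ℝ) := Nat.cast_pos.mpr hm
  have h1 : Real.sqrt m ≠ 0 := (Real.sqrt_pos.mpr hmr).ne'
  have h2 : Real.sqrt m1 ≠ 0 := (Real.sqrt_pos.mpr hm1).ne'
  rw [Utilde_eq, mul_fromCols, Sinv, fromCols_mul_fromBlocks]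
  simp only [Matrix.mul_zero, add_zero, zero_add, Matrix.mul_smul, Matrix.mul_one]
  rw [Xext]
  ext i j
  cases j with
  | inl j => simp [fromCols]
  | inr j =>
    simp [fromCols, Ucol, mul_apply, ← Finset.sum_mul,
      Real.sqrt_div (Nat.cast_nonneg m) m1]
    field_simp
    rw [Real.sq_sqrt (Nat.cast_nonneg m), mul_comm]

lemma norm_sq {p q : Type*} [Fintype p] [Fintype q] (A : Matrix p q ℝ) (v : q → ℝ) :
    v ⬝ᵥ ((Aᵀ * A) *ᵥ v) = (A *ᵥ v) ⬝ᵥ (A *ᵥ v) := by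
  rw [← Matrix.mulVec_mulVec, Matrix.dotProduct_mulVec, Matrix.vecMul_transpose]

/-- GRCCA-to-RCCA feature extension with one group (`K = 1`): for
`α̃ = S̃ Ũᵀ α` (equivalently `α = Ũ S̃⁻¹ α̃`),
`αᵀ((1/n)XᵀX + λ₁(I−C_m) + μ₁C_m)α = α̃ᵀ((1/n)X̃(λ₁,μ₁)ᵀX̃(λ₁,μ₁) + I)α̃`. -/
theorem grcca_to_rcca_extension (n m : ℕ) (hn : 0 < n) (hm : 0 < m)
    (l1 m1 : ℝ) (hl1 : 0 < l1) (hm1 : 0 < m1)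
    (X : Matrix (Fin n) (Fin m) ℝ) (α : Fin m → ℝ) :
    α = (Utilde m * (Stilde m l1 m1)⁻¹) *ᵥ (Stilde m l1 m1 *ᵥ ((Utilde m)ᵀ *ᵥ α)) ∧
    α ⬝ᵥ (((n : ℝ)⁻¹ • (Xᵀ * X) +
        l1 • ((1 : Matrix (Fin m) (Fin m) ℝ) - Cavg m) + m1 • Cavg m) *ᵥ α) =
      (Stilde m l1 m1 *ᵥ ((Utilde m)ᵀ *ᵥ α)) ⬝ᵥ
        (((n : ℝ)⁻¹ • ((Xext n m X l1 m1)ᵀ * Xext n m X l1 m1) + 1) *ᵥ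
          (Stilde m l1 m1 *ᵥ ((Utilde m)ᵀ *ᵥ α))) := by
  constructor
  · rw [Matrix.mulVec_mulVec, Matrix.mulVec_mulVec, Sinv_eq m hl1 hm1,
      Matrix.mul_assoc (Utilde m), Sinv_mul_Stilde m hl1 hm1, Matrix.mul_one,
      UUt m hm, Matrix.one_mulVec]
  · -- abbreviations
    have hβ : Stilde m l1 m1 *ᵥ ((Utilde m)ᵀ *ᵥ α) =
        (Stilde m l1 m1 * (Utilde m)ᵀ) *ᵥ α := by rw [Matrix.mulVec_mulVec]
    -- X̃ *ᵥ β = X *ᵥ α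
    have hXb : Xext n m X l1 m1 *ᵥ (Stilde m l1 m1 *ᵥ ((Utilde m)ᵀ *ᵥ α)) = X *ᵥ α := by
      rw [Xext_eq n m hm hl1 hm1, Matrix.mulVec_mulVec, Matrix.mulVec_mulVec,
        Matrix.mul_assoc (X * Utilde m), Sinv_mul_Stilde m hl1 hm1, Matrix.mul_one,
        Matrix.mul_assoc X, UUt m hm, Matrix.mul_one]
    -- β ⬝ β
    have hbb : (Stilde m l1 m1 *ᵥ ((Utilde m)ᵀ *ᵥ α)) ⬝ᵥ (Stilde m l1 m1 *ᵥ ((Utilde m)ᵀ *ᵥ α))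
        = α ⬝ᵥ ((l1 • ((1 : Matrix (Fin m) (Fin m) ℝ) - Cavg m) + m1 • Cavg m) *ᵥ α) := by
      rw [hβ, ← norm_sq (Stilde m l1 m1 * (Utilde m)ᵀ) α, Matrix.transpose_mul,
        Matrix.transpose_transpose, Ssymm]
      rw [show Utilde m * Stilde m l1 m1 * (Stilde m l1 m1 * (Utilde m)ᵀ)
          = Utilde m * (Stilde m l1 m1 * Stilde m l1 m1) * (Utilde m)ᵀ by
        rw [Matrix.mul_assoc, Matrix.mul_assoc, Matrix.mul_assoc]]
      rw [USSU m hm hl1 hm1]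
    conv_rhs => rw [Matrix.add_mulVec, Matrix.one_mulVec, dotProduct_add,
      Matrix.smul_mulVec, dotProduct_smul, norm_sq (Xext n m X l1 m1), hXb, hbb]
    conv_lhs => rw [add_assoc, Matrix.add_mulVec, dotProduct_add,
      Matrix.smul_mulVec, dotProduct_smul, norm_sq X α]
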